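/- Let Γ be a finite alphabet and let L ⊆ Γ* be upward-closed with respect to the subword order (i.e., u ∈ L and u ⊑ v imply v ∈ L). Then L is a weakly acyclic language. -/

import Mathlib

/-- A DFA is *weakly acyclic* if whenever a nonempty word `w` loops on a state `q`,
every letter occurring in `w` self-loops on `q`. -/
def DFA.WeaklyAcyclic {α : Type*} {σ : Type*} (A : DFA α σ) : Prop :=
  ∀ (q : σ) (w : List α), w ≠ [] → A.evalFrom q w = q → ∀ a ∈ w, A.step q a = q

/-- A language is weakly acyclic if it is accepted by some weakly acyclic DFA
with finitely many states. -/
def Language.IsWeaklyAcyclic {α : Type*} (L : Language α) : Prop :=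
  ∃ (σ : Type) (_ : Fintype σ) (A : DFA α σ), A.WeaklyAcyclic ∧ A.accepts = L

/-- The residual of the language `L` with respect to the word `u`. -/
def Language.residual {α : Type*} (L : Language α) (u : List α) : Language α :=
  {v | u ++ v ∈ L}

section Aux

variable {α : Type}

/-- Higman's lemma specialized: the sublist relation is a pwo on lists over a finite alphabet. -/
lemma pwo_sublist [Finite α] (S : Set (List α)) :
    S.PartiallyWellOrderedOn (fun a b => List.Sublist a b) := by
  have h1 : (Set.univ : Set α).PartiallyWellOrderedOn (· = ·) := by
    rw [Set.partiallyWellOrderedOn_iff_exists_lt]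
    intro f _
    obtain ⟨m, n, hmn, he⟩ := Finite.exists_ne_map_eq_of_infinite f
    rcases lt_or_gt_of_ne hmn with hlt | hlt
    · exact ⟨m, n, hlt, he⟩
    · exact ⟨n, m, hlt, he.symm⟩
  have h2 := h1.partiallyWellOrderedOn_sublistForall₂ (· = ·)
  rw [Set.partiallyWellOrderedOn_iff_exists_lt] at h2 ⊢
  intro f hf
  obtain ⟨m, n, hmn, hr⟩ := h2 f (fun n x _ => Set.mem_univ x)
  refine ⟨m, n, hmn, ?_⟩
  obtain ⟨l, hl1, hl2⟩ := List.sublistForall₂_iff.mp hr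
  have : f m = l := by
    have := List.forall₂_eq_eq_eq (α := α) ▸ hl1
    exact this
  rwa [this]

/-- Every set of lists over a finite alphabet has a finite "basis" of minimal-enough elements. -/
lemma exists_basis [Finite α] (S : Set (List α)) :
    ∃ B : Finset (List α), ↑B ⊆ S ∧ ∀ v ∈ S, ∃ u ∈ B, u.Sublist v := by
  classical
  by_contra hc
  push_neg at hc
  have key : ∀ B : Finset (List α), ∃ v, v ∈ S ∧ ∀ u ∈ B, u ∈ S → ¬ u.Sublist v := by
    intro B
    obtain ⟨v, hv, hv2⟩ := hc (B.filter (· ∈ S)) (by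
      intro x hx
      simp only [Finset.coe_filter, Set.mem_setOf_eq] at hx
      exact hx.2)
    exact ⟨v, hv, fun u hu huS => hv2 u (Finset.mem_filter.mpr ⟨hu, huS⟩)⟩
  choose pick hp1 hp2 using key
  let seq : ℕ → Finset (List α) := fun n => Nat.rec ∅ (fun _ B => insert (pick B) B) n
  have hseq_succ : ∀ n, seq (n + 1) = insert (pick (seq n)) (seq n) := fun n => rfl
  have hmono : ∀ m n, m ≤ n → seq m ⊆ seq n := by
    intro m n hmn
    induction n with
    | zero => simp_all
    | succ k ih =>
      rcases Nat.le_succ_iff.mp hmn with h' | h'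
      · exact (ih h').trans (by rw [hseq_succ]; exact Finset.subset_insert _ _)
      · subst h'; rfl
  have hmem : ∀ m n, m < n → pick (seq m) ∈ seq n := by
    intro m n hmn
    have : pick (seq m) ∈ seq (m + 1) := by rw [hseq_succ]; exact Finset.mem_insert_self _ _
    exact hmono (m + 1) n hmn this
  obtain ⟨m, n, hmn, hsub⟩ := Set.partiallyWellOrderedOn_iff_exists_lt.mp (pwo_sublist S) (fun n => pick (seq n)) (fun n => hp1 (seq n))
  exact hp2 (seq n) (pick (seq m)) (hmem m n hmn) (hp1 (seq m)) hsub

/-- One step of the greedy sublist-matching automaton on the remaining suffix. -/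
def step1 [DecidableEq α] (r : List α) (a : α) : List α :=
  match r with
  | [] => []
  | b :: t => if b = a then t else b :: t

lemma chk_eq_nil_iff [DecidableEq α] (w : List α) :
    ∀ r : List α, List.foldl step1 r w = [] ↔ r.Sublist w := by
  induction w with
  | nil => intro r; simpa using List.sublist_nil.symm
  | cons a w ih =>
    intro r
    match r with
    | [] =>
      simp only [List.foldl_cons, step1, ih]
      simp
    | b :: t =>
      simp only [List.foldl_cons, step1]
      by_cases hb : b = a
      · subst hb
        rw [if_pos rfl, ih]
        exact (List.cons_sublist_cons (a := b)).symm
      · rw [if_neg hb, ih]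
        constructor
        · exact fun hs => hs.cons a
        · intro hs
          cases hs with
          | cons _ h => exact h
          | cons_cons => exact absurd rfl hb

/-- One step of the position-based matching automaton for the pattern `u`. -/
def nextPos [DecidableEq α] (u : List α) (k : Fin (u.length + 1)) (a : α) :
    Fin (u.length + 1) :=
  if h : (u.drop k).head? = some a then
    ⟨k + 1, by
      have hne : u.drop k ≠ [] := by intro he; rw [he] at h; simp at h
      have hk : (k : ℕ) < u.length := by
        by_contra hk'
        exact hne (List.drop_eq_nil_of_le (le_of_not_gt hk'))
      omega⟩
  else k

lemma le_nextPos [DecidableEq α] (u : List α) (k : Fin (u.length + 1)) (a : α) :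
    k ≤ nextPos u k a := by
  unfold nextPos
  split_ifs with h
  · exact Fin.le_def.mpr (by simp)
  · exact le_refl k

lemma drop_nextPos [DecidableEq α] (u : List α) (k : Fin (u.length + 1)) (a : α) :
    u.drop (nextPos u k a) = step1 (u.drop k) a := by
  unfold nextPos
  split_ifs with h
  · cases hd : u.drop k with
    | nil => rw [hd] at h; simp at h
    | cons b t =>
      rw [hd] at h
      simp only [List.head?_cons, Option.some.injEq] at h
      subst h
      have ht : t = u.drop ((k : ℕ) + 1) := by
        rw [← List.tail_drop, hd]
        rfl
      simp only [hd, step1, if_pos rfl]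
      exact ht.symm
  · cases hd : u.drop k with
    | nil => simp [hd, step1]
    | cons b t =>
      rw [hd] at h
      have hb : b ≠ a := by
        intro he; subst he; exact h (by simp)
      simp [hd, step1, hb]

/-- A DFA whose transition function is inflationary w.r.t. a partial order is weakly acyclic. -/
lemma weaklyAcyclic_of_monotone {σ : Type} [PartialOrder σ] (A : DFA α σ)
    (hmono : ∀ q a, q ≤ A.step q a) : A.WeaklyAcyclic := by
  have hle : ∀ (w : List α) (q : σ), q ≤ A.evalFrom q w := by
    intro w
    induction w with
    | nil => intro q; exact le_refl q
    | cons a w ih => intro q; exact le_trans (hmono q a) (ih (A.step q a))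
  intro q w hw hloop a ha
  obtain ⟨s, t, rfl⟩ := List.append_of_mem ha
  have h1 : A.evalFrom q (s ++ a :: t) = A.evalFrom (A.step (A.evalFrom q s) a) t := by
    rw [DFA.evalFrom_of_append]
    rfl
  have hq1 : q ≤ A.evalFrom q s := hle s q
  have hq2 : A.evalFrom q s ≤ A.step (A.evalFrom q s) a := hmono _ a
  have hq3 : A.step (A.evalFrom q s) a ≤ A.evalFrom (A.step (A.evalFrom q s) a) t := hle t _
  have hend : A.evalFrom (A.step (A.evalFrom q s) a) t = q := by rw [← h1, hloop]
  have hs : A.evalFrom q s = q :=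
    le_antisymm (hq2.trans (hq3.trans_eq hend)) hq1
  have : A.step (A.evalFrom q s) a = q :=
    le_antisymm (hq3.trans_eq hend) (hq1.trans hq2)
  rwa [hs] at this

end Aux

/-- Every language that is upward-closed with respect to the (scattered) subword
order is weakly acyclic. -/
theorem upwardClosed_weaklyAcyclic {α : Type} [Fintype α] (L : Language α)
    (h : ∀ u v : List α, u ∈ L → u.Sublist v → v ∈ L) : L.IsWeaklyAcyclic := by
  classical
  obtain ⟨B, hBL, hBbasis⟩ := exists_basis (L : Set (List α))
  let A : DFA α (∀ u : {x // x ∈ B}, Fin (u.1.length + 1)) :=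
    { step := fun q a u => nextPos u.1 (q u) a
      start := fun u => ⟨0, Nat.succ_pos _⟩
      accept := {q | ∃ u, (q u : ℕ) = u.1.length} }
  refine ⟨_, inferInstance, A, ?_, ?_⟩
  · exact weaklyAcyclic_of_monotone A (fun q a u => le_nextPos u.1 (q u) a)
  · have keyinv : ∀ (w : List α) (q) (u : {x // x ∈ B}),
        u.1.drop (A.evalFrom q w u) = List.foldl step1 (u.1.drop (q u)) w := by
      intro w
      induction w with
      | nil => intro q u; rfl
      | cons a w ih =>
        intro q u
        have hstep : A.evalFrom q (a :: w) = A.evalFrom (A.step q a) w := rfl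
        rw [hstep, ih (A.step q a) u, List.foldl_cons]
        congr 1
        exact drop_nextPos u.1 (q u) a
    ext w
    rw [DFA.mem_accepts, DFA.eval]
    constructor
    · rintro ⟨u, hu⟩
      have hnil : u.1.drop (A.evalFrom A.start w u) = [] := by
        rw [hu]
        exact List.drop_length (l := u.1)
      rw [keyinv w A.start u] at hnil
      have hsub : u.1.Sublist w := (chk_eq_nil_iff w u.1).mp (by simpa [A] using hnil)
      exact h u.1 w (hBL u.2) hsub
    · intro hw
      obtain ⟨u, huB, hsub⟩ := hBbasis w hw
      refine ⟨⟨u, huB⟩, ?_⟩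
      have h0 : u.drop (A.evalFrom A.start w ⟨u, huB⟩) = [] := by
        rw [keyinv w A.start ⟨u, huB⟩]
        simpa [A] using (chk_eq_nil_iff w u).mpr hsub
      have h1 : u.length ≤ (A.evalFrom A.start w ⟨u, huB⟩ : ℕ) := by
        by_contra h1
        rw [List.drop_eq_nil_iff] at h0
        omega
      have h2 : (A.evalFrom A.start w ⟨u, huB⟩ : ℕ) ≤ u.length :=
        Nat.lt_succ_iff.mp (A.evalFrom A.start w ⟨u, huB⟩).2
      show (A.evalFrom A.start w ⟨u, huB⟩ : ℕ) = u.length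
      omega
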